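/- Let A be a J×I matrix with nonnegative entries and all column sums ≤ 1, q ∈ ℝ^I_{>0}, and let δ^{(n)} be the GIS(1) sequence defined by δ^{(0)} = 1 and δ^{(n+1)}_i = δ^{(n)}_i Π_j (A_j q / A_j δ^{(n)})^{a_{ji}}, assuming A_j δ^{(n)} > 0 for all j,n. Then the sequence D(q, δ^{(n)}) is monotone nonincreasing in n, where D is the Bregman divergence. -/

import Mathlib

open Finset Real

/-- Weighted AM-GM with total weight ≤ 1 (remaining mass placed on the value 1). -/
private lemma prod_rpow_le {J : ℕ} (w z : Fin J → ℝ) (hw : ∀ j, 0 ≤ w j)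
    (hw1 : (∑ j, w j) ≤ 1) (hz : ∀ j, 0 ≤ z j) :
    (∏ j, z j ^ (w j)) ≤ 1 - (∑ j, w j) + ∑ j, w j * z j := by
  set W : Option (Fin J) → ℝ := fun o => o.elim (1 - ∑ j, w j) w
  set Z : Option (Fin J) → ℝ := fun o => o.elim 1 z
  have h := Real.geom_mean_le_arith_mean_weighted Finset.univ W Z
    (fun o _ => by rcases o with _ | j <;> simp [W, Z, hw, sub_nonneg.2 hw1])
    (by simp [W, Fintype.sum_option])
    (fun o _ => by rcases o with _ | j <;> simp [W, Z, hz, zero_le_one])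
  rw [Fintype.prod_option, Fintype.sum_option] at h
  simpa [W, Z, Real.one_rpow] using h

/-- Nonnegativity of each term of the Bregman divergence. -/
private lemma klterm_nonneg {a b : ℝ} (ha : 0 ≤ a) (hb : 0 < b) :
    0 ≤ a * Real.log (a / b) + b - a := by
  rcases eq_or_lt_of_le ha with h | h
  · simp [← h]; linarith
  · have hlog : Real.log (b / a) ≤ b / a - 1 := Real.log_le_sub_one_of_pos (div_pos hb h)
    have hinv : Real.log (b / a) = - Real.log (a / b) := by
      rw [← Real.log_inv]; congr 1; field_simp
    rw [hinv] at hlog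
    have h2 : a * (-Real.log (a / b)) ≤ a * (b / a - 1) :=
      mul_le_mul_of_nonneg_left hlog ha
    have h3 : a * (b / a - 1) = b - a := by field_simp
    nlinarith

/-- One GIS(1) step does not increase the Bregman divergence. -/
private lemma gis_step {J I : ℕ} (A : Fin J → Fin I → ℝ)
    (hA : ∀ j i, 0 ≤ A j i) (hcol : ∀ i, (∑ j, A j i) ≤ 1)
    (q d d' : Fin I → ℝ) (a b : Fin J → ℝ)
    (ha : ∀ j, a j = ∑ i, A j i * q i) (hb : ∀ j, b j = ∑ i, A j i * d i)
    (hq : ∀ i, 0 < q i) (hd : ∀ i, 0 < d i) (hbpos : ∀ j, 0 < b j)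
    (hrec : ∀ i, d' i = d i * ∏ j, (a j / b j) ^ (A j i)) :
    (∑ i, q i * Real.log (q i / d' i)) - ((∑ i, q i) - (∑ i, d' i)) ≤
      (∑ i, q i * Real.log (q i / d i)) - ((∑ i, q i) - (∑ i, d i)) := by
  have hapos : ∀ j, 0 ≤ a j := fun j => by
    rw [ha j]; exact Finset.sum_nonneg fun i _ => mul_nonneg (hA j i) (hq i).le
  have hag : ∀ j i, 0 < A j i → 0 < a j := by
    intro j i h
    rw [ha j]
    exact lt_of_lt_of_le (mul_pos h (hq i))
      (Finset.single_le_sum (fun i' _ => mul_nonneg (hA j i') (hq i').le) (Finset.mem_univ i))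
  have hfacpos : ∀ j i, 0 < (a j / b j) ^ (A j i) := by
    intro j i
    rcases eq_or_lt_of_le (hA j i) with h | h
    · rw [← h, Real.rpow_zero]; exact one_pos
    · exact Real.rpow_pos_of_pos (div_pos (hag j i h) (hbpos j)) _
  have hd'pos : ∀ i, 0 < d' i := by
    intro i
    rw [hrec i]
    exact mul_pos (hd i) (Finset.prod_pos fun j _ => hfacpos j i)
  have hlog : ∀ i, Real.log (d' i) =
      Real.log (d i) + ∑ j, A j i * Real.log (a j / b j) := by
    intro i
    rw [hrec i, Real.log_mul (hd i).ne' (Finset.prod_pos fun j _ => hfacpos j i).ne',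
      Real.log_prod (fun j _ => (hfacpos j i).ne')]
    congr 1
    refine Finset.sum_congr rfl fun j _ => ?_
    rcases eq_or_lt_of_le (hA j i) with h | h
    · rw [← h, Real.rpow_zero, Real.log_one, zero_mul]
    · rw [Real.log_rpow (div_pos (hag j i h) (hbpos j))]
  -- the change in the entropy part
  have S1 : ∑ i, q i * Real.log (q i / d' i) =
      (∑ i, q i * Real.log (q i / d i)) - ∑ j, a j * Real.log (a j / b j) := by
    have step1 : ∀ i, q i * Real.log (q i / d' i) =
        q i * Real.log (q i / d i) - ∑ j, q i * (A j i * Real.log (a j / b j)) := by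
      intro i
      rw [Real.log_div (hq i).ne' (hd'pos i).ne', Real.log_div (hq i).ne' (hd i).ne',
        hlog i]
      rw [show (∑ j, q i * (A j i * Real.log (a j / b j))) =
          q i * ∑ j, A j i * Real.log (a j / b j) from (Finset.mul_sum _ _ _).symm]
      ring
    rw [Finset.sum_congr rfl fun i _ => step1 i, Finset.sum_sub_distrib, Finset.sum_comm]
    congr 1
    refine Finset.sum_congr rfl fun j _ => ?_
    rw [ha j, Finset.sum_mul]
    exact Finset.sum_congr rfl fun i _ => by ring
  -- the change in the mass part, via AM-GM
  have S2 : (∑ i, d' i) ≤ (∑ i, d i) + ∑ j, (a j - b j) := by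
    have hstep : ∀ i, d' i ≤
        d i * (1 - (∑ j, A j i) + ∑ j, A j i * (a j / b j)) := by
      intro i
      rw [hrec i]
      exact mul_le_mul_of_nonneg_left
        (prod_rpow_le (fun j => A j i) (fun j => a j / b j) (fun j => hA j i) (hcol i)
          (fun j => div_nonneg (hapos j) (hbpos j).le)) (hd i).le
    have per_i : ∀ i, d i * (1 - (∑ j, A j i) + ∑ j, A j i * (a j / b j)) =
        d i + ∑ j, (A j i * d i) * (a j / b j - 1) := by
      intro i
      have : ∑ j, (A j i * d i) * (a j / b j - 1) =
          (d i * ∑ j, A j i * (a j / b j)) - d i * (∑ j, A j i) := by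
        rw [Finset.mul_sum, Finset.mul_sum, ← Finset.sum_sub_distrib]
        exact Finset.sum_congr rfl fun j _ => by ring
      rw [this]; ring
    calc (∑ i, d' i) ≤ ∑ i, d i * (1 - (∑ j, A j i) + ∑ j, A j i * (a j / b j)) :=
          Finset.sum_le_sum fun i _ => hstep i
      _ = (∑ i, d i) + ∑ j, (a j - b j) := by
          rw [Finset.sum_congr rfl fun i _ => per_i i, Finset.sum_add_distrib, Finset.sum_comm]
          congr 1
          refine Finset.sum_congr rfl fun j _ => ?_
          rw [← Finset.sum_mul, ← hb j, mul_sub, mul_one,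
            mul_div_cancel₀ _ (hbpos j).ne']
  -- nonnegativity of the divergence of the images
  have S3 : (∑ j, (a j - b j)) ≤ ∑ j, a j * Real.log (a j / b j) := by
    have h0 : 0 ≤ ∑ j, (a j * Real.log (a j / b j) + b j - a j) :=
      Finset.sum_nonneg fun j _ => klterm_nonneg (hapos j) (hbpos j)
    have h2 : ∑ j, (a j * Real.log (a j / b j) + b j - a j) =
        (∑ j, a j * Real.log (a j / b j)) - ∑ j, (a j - b j) := by
      rw [← Finset.sum_sub_distrib]
      exact Finset.sum_congr rfl fun j _ => by ring
    linarith [h2 ▸ h0]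
  rw [S1]
  linarith [S2, S3]

/-- Along the GIS(1) sequence, the Bregman divergence `D(q, δ⁽ⁿ⁾)` is
monotone nonincreasing in `n`. -/
theorem gis_bregman_antitone (J I : ℕ) (A : Fin J → Fin I → ℝ)
    (hA : ∀ j i, 0 ≤ A j i) (hcol : ∀ i, (∑ j, A j i) ≤ 1)
    (q : Fin I → ℝ) (hq : ∀ i, 0 < q i)
    (δ : ℕ → Fin I → ℝ) (hδ0 : ∀ i, δ 0 i = 1)
    (hpos : ∀ n j, 0 < ∑ i, A j i * δ n i)
    (hrec : ∀ n i, δ (n + 1) i =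
      δ n i * ∏ j, ((∑ i', A j i' * q i') / (∑ i', A j i' * δ n i')) ^ (A j i)) :
    Antitone (fun n =>
      (∑ i, q i * Real.log (q i / δ n i)) - ((∑ i, q i) - (∑ i, δ n i))) := by
  have hδpos : ∀ n i, 0 < δ n i := by
    intro n
    induction n with
    | zero => intro i; rw [hδ0 i]; exact one_pos
    | succ m ih =>
      intro i
      rw [hrec m i]
      refine mul_pos (ih i) (Finset.prod_pos fun j _ => ?_)
      rcases eq_or_lt_of_le (hA j i) with h | h
      · rw [← h, Real.rpow_zero]; exact one_pos
      · refine Real.rpow_pos_of_pos (div_pos ?_ (hpos m j)) _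
        exact lt_of_lt_of_le (mul_pos h (hq i))
          (Finset.single_le_sum (fun i' _ => mul_nonneg (hA j i') (hq i').le)
            (Finset.mem_univ i))
  apply antitone_nat_of_succ_le
  intro n
  exact gis_step A hA hcol q (δ n) (δ (n + 1))
    (fun j => ∑ i, A j i * q i) (fun j => ∑ i, A j i * δ n i)
    (fun j => rfl) (fun j => rfl) hq (hδpos n) (hpos n) (hrec n)
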